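/- Let F = (f_1,…,f_N) be a uniform tight frame with bound A > 0 for an n-dimensional complex inner product space H such that |⟨f_i,f_j⟩| is the same for all i ≠ j, and let p > 1. If G = (g_1,…,g_N) is a dual frame of F with ((1/N)∑_{i=1}^N (‖f_i‖·‖g_i‖)^p)^{1/p} = n/N (i.e., G is 1-erasure Frobenius optimal), then ⟨f_i, g_i⟩ = n/N for all 1 ≤ i ≤ N; that is, G is a 1-uniform dual of F. -/

import Mathlib

open scoped ComplexInnerProductSpace

/-- Let `F = (f₁,…,f_N)` be a uniform tight frame with bound
`A > 0` for an `n`-dimensional complex inner product space `H` such that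
`|⟨f i, f j⟩|` is the same for all `i ≠ j`, and let `p > 1`.  If `G` is a dual
frame of `F` with `((1/N) ∑ i, (‖f i‖·‖g i‖)^p)^(1/p) = n/N` (i.e. `G` is
`1`-erasure Frobenius optimal), then `⟨f i, g i⟩ = n/N` for all `i`, i.e. `G`
is a `1`-uniform dual of `F`.  (The paper's `⟨f i, g i⟩` is `⟪g i, f i⟫`.) -/
theorem stmt_10 {H : Type*} [NormedAddCommGroup H] [InnerProductSpace ℂ H]
    [FiniteDimensional ℂ H] (n N : ℕ) (hn : Module.finrank ℂ H = n)
    (f : Fin N → H) (A : ℝ) (hA : 0 < A)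
    (htight : ∀ x : H, ∑ i, ‖⟪f i, x⟫‖ ^ 2 = A * ‖x‖ ^ 2)
    (huniform : ∀ i j, ‖f i‖ = ‖f j‖)
    (hequi : ∃ c : ℝ, ∀ i j, i ≠ j → ‖⟪f i, f j⟫‖ = c)
    (p : ℝ) (hp : 1 < p)
    (g : Fin N → H)
    (hdual : ∀ x : H, x = ∑ i, ⟪f i, x⟫ • g i)
    (hopt : ((1 / (N : ℝ)) * ∑ i, (‖f i‖ * ‖g i‖) ^ p) ^ (1 / p) = (n : ℝ) / N) :
    ∀ i, ⟪g i, f i⟫ = (n : ℂ) / N := by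
  classical
  intro i0
  have hNpos : 0 < N := i0.pos
  have hN : (0:ℝ) < N := by exact_mod_cast hNpos
  have hNne : (N:ℝ) ≠ 0 := ne_of_gt hN
  -- trivial case n = 0
  rcases Nat.eq_zero_or_pos n with hn0 | hnpos
  · subst hn0
    have : Subsingleton H := Module.finrank_zero_iff.mp hn
    have hf0 : f i0 = 0 := Subsingleton.elim _ _
    simp [hf0]
  have hnR : (0:ℝ) < n := by exact_mod_cast hnpos
  have hppos : (0:ℝ) < p := lt_trans one_pos hp
  -- key expansion
  have key : ∀ x y : H, ⟪x, y⟫ = ∑ i, ⟪f i, y⟫ * ⟪x, g i⟫ := by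
    intro x y
    conv_lhs => rw [hdual y]
    rw [inner_sum]
    simp [inner_smul_right]
  -- trace identity
  set b := stdOrthonormalBasis ℂ H with hb
  have htr : ∑ i, ⟪f i, g i⟫ = (n : ℂ) := by
    calc ∑ i, ⟪f i, g i⟫
        = ∑ i, ∑ k, ⟪f i, b k⟫ * ⟪b k, g i⟫ :=
          Finset.sum_congr rfl fun i _ => (b.sum_inner_mul_inner (f i) (g i)).symm
      _ = ∑ k, ∑ i, ⟪f i, b k⟫ * ⟪b k, g i⟫ := Finset.sum_comm
      _ = ∑ k, ⟪b k, b k⟫ :=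
          Finset.sum_congr rfl fun k _ => (key (b k) (b k)).symm
      _ = (n : ℂ) := by
          have h1 : ∀ k, ⟪b k, b k⟫ = 1 := by
            intro k
            rw [inner_self_eq_norm_sq_to_K, b.orthonormal.1 k]
            norm_num
          simp [h1, hn]
  set a : Fin N → ℝ := fun i => ‖f i‖ * ‖g i‖ with ha
  have ha0 : ∀ i, 0 ≤ a i := fun i => mul_nonneg (norm_nonneg _) (norm_nonneg _)
  have hcs : ∀ i, ‖⟪f i, g i⟫‖ ≤ a i := fun i => norm_inner_le_norm _ _
  -- the mean of the a i is at least n/N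
  have hsum_ge : (n:ℝ) ≤ ∑ i, a i := by
    calc (n:ℝ) = ‖(n:ℂ)‖ := by simp
      _ = ‖∑ i, ⟪f i, g i⟫‖ := by rw [htr]
      _ ≤ ∑ i, ‖⟪f i, g i⟫‖ := norm_sum_le _ _
      _ ≤ ∑ i, a i := Finset.sum_le_sum fun i _ => hcs i
  -- from hopt: (1/N) * ∑ a i ^ p = (n/N)^p
  have hS0 : (0:ℝ) ≤ (1 / (N : ℝ)) * ∑ i, (‖f i‖ * ‖g i‖) ^ p := by
    apply mul_nonneg (by positivity)
    exact Finset.sum_nonneg fun i _ => Real.rpow_nonneg (ha0 i) p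
  have hS : (1 / (N : ℝ)) * ∑ i, a i ^ p = ((n:ℝ)/N) ^ p := by
    have h := congrArg (· ^ p) hopt
    simp only [← Real.rpow_mul hS0, one_div_mul_cancel (ne_of_gt hppos),
      Real.rpow_one] at h
    exact h
  -- Jensen equality case: all a i equal
  have hw : ∀ i ∈ (Finset.univ : Finset (Fin N)), (0:ℝ) < 1 / N :=
    fun i _ => by positivity
  have hw1 : ∑ _i ∈ (Finset.univ : Finset (Fin N)), (1:ℝ) / N = 1 := by
    simp [Finset.card_univ, hNne]
  have hmem : ∀ i ∈ (Finset.univ : Finset (Fin N)), a i ∈ Set.Ici (0:ℝ) :=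
    fun i _ => ha0 i
  have hle : ∑ i, (1/(N:ℝ)) • ((a i) ^ p) ≤ (∑ i, (1/(N:ℝ)) • a i) ^ p := by
    have hL : ∑ i, (1/(N:ℝ)) • ((a i) ^ p) = ((n:ℝ)/N) ^ p := by
      simpa [smul_eq_mul, Finset.mul_sum] using hS
    have hR : ((n:ℝ)/N) ^ p ≤ (∑ i, (1/(N:ℝ)) • a i) ^ p := by
      apply Real.rpow_le_rpow (by positivity) _ (le_of_lt hppos)
      have : (n:ℝ)/N ≤ (1/(N:ℝ)) * ∑ i, a i := by
        rw [div_eq_mul_inv, mul_comm, one_div, mul_le_mul_iff_right₀ (by positivity)]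
        exact hsum_ge
      simpa [smul_eq_mul, Finset.mul_sum] using this
    rw [hL]; exact hR
  have hconst : ∀ j k : Fin N, a j = a k := by
    intro j k
    exact (strictConvexOn_rpow hp).eq_of_le_map_sum hw hw1 hmem hle
      (Finset.mem_univ j) (Finset.mem_univ k)
  -- each a i = n/N
  have haval : ∀ i, a i = (n:ℝ)/N := by
    intro i
    have hsumconst : ∑ j, a j ^ p = (N:ℝ) * a i ^ p := by
      rw [Finset.sum_congr rfl fun j _ => by rw [hconst j i]]
      simp [Finset.card_univ, mul_comm]
    have : a i ^ p = ((n:ℝ)/N) ^ p := by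
      rw [hsumconst] at hS
      field_simp at hS ⊢
      linarith [hS]
    exact Real.rpow_left_injOn (ne_of_gt hppos) (ha0 i) (by simp only [Set.mem_setOf_eq]; positivity) this
  have hsum_eq : ∑ i, a i = (n:ℝ) := by
    rw [Finset.sum_congr rfl fun j _ => haval j]
    simp [Finset.card_univ]
    field_simp
  -- now the real parts
  have hre_le : ∀ i, (⟪f i, g i⟫).re ≤ (n:ℝ)/N := by
    intro i
    calc (⟪f i, g i⟫).re ≤ ‖⟪f i, g i⟫‖ := Complex.re_le_norm _
      _ ≤ a i := hcs i
      _ = (n:ℝ)/N := haval i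
  have hre_sum : ∑ i, (⟪f i, g i⟫).re = (n:ℝ) := by
    have := congrArg Complex.re htr
    simpa [Complex.re_sum] using this
  have hre_eq : ∀ i, (⟪f i, g i⟫).re = (n:ℝ)/N := by
    have h := (Finset.sum_eq_sum_iff_of_le
      (fun i (_ : i ∈ Finset.univ) => hre_le i)).1 ?_
    · exact fun i => h i (Finset.mem_univ i)
    · rw [hre_sum]
      simp [Finset.card_univ]
      field_simp
  -- conclude each inner product equals n/N
  have hci : ⟪f i0, g i0⟫ = ((n:ℝ)/N : ℝ) := by
    have hnorm_le : ‖⟪f i0, g i0⟫‖ ≤ (n:ℝ)/N := (hcs i0).trans (haval i0).le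
    have hre : (⟪f i0, g i0⟫).re = (n:ℝ)/N := hre_eq i0
    have him : (⟪f i0, g i0⟫).im = 0 := by
      by_contra him
      have h1 : ‖⟪f i0, g i0⟫‖ ^ 2 = ((n:ℝ)/N)^2 + (⟪f i0, g i0⟫).im ^ 2 := by
        rw [← hre, Complex.sq_norm, Complex.normSq_apply]
        ring
      have h2 : ((n:ℝ)/N)^2 < ‖⟪f i0, g i0⟫‖ ^ 2 := by
        rw [h1]
        have : 0 < (⟪f i0, g i0⟫).im ^ 2 := by positivity
        linarith
      have h3 : ‖⟪f i0, g i0⟫‖ ^ 2 ≤ ((n:ℝ)/N)^2 := by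
        apply pow_le_pow_left₀ (norm_nonneg _) hnorm_le
      linarith
    apply Complex.ext
    · simpa using hre
    · simpa using him
  have : ⟪g i0, f i0⟫ = (starRingEnd ℂ) ⟪f i0, g i0⟫ := (inner_conj_symm _ _).symm
  rw [this, hci]
  push_cast
  simp
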